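/- Let c(p) = (p^{αδ}, p^{α(1−δ)}, A p^{α}) for p > 0, with constants A > 0, α > 0, 0 < δ < 1. Then c(p) → 0 as p → 0⁺ and the unit vector c(p)/‖c(p)‖ converges as p → 0⁺ to (1,0,0) if δ < 1/2, to (1,1,0)/√2 if δ = 1/2, and to (0,1,0) if δ > 1/2. -/

import Mathlib

open Filter

lemma rpow_tendsto0 {r : ℝ} (hr : 0 < r) :
    Tendsto (fun p : ℝ => p ^ r) (nhdsWithin 0 (Set.Ioi 0)) (nhds 0) := by
  have h := (Real.continuousAt_rpow_const 0 r (Or.inr hr.le)).tendsto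
  rw [Real.zero_rpow hr.ne'] at h
  exact h.mono_left nhdsWithin_le_nhds

lemma pi3_tendsto {l : Filter ℝ} {f g h : ℝ → ℝ} {a b c : ℝ}
    (hf : Tendsto f l (nhds a)) (hg : Tendsto g l (nhds b))
    (hh : Tendsto h l (nhds c)) :
    Tendsto (fun p => ![f p, g p, h p]) l (nhds ![a, b, c]) := by
  rw [tendsto_pi_nhds]
  intro i
  fin_cases i <;> simpa

lemma aux_unit {E : Type*} [NormedAddCommGroup E] [NormedSpace ℝ E]
    {l : Filter ℝ} {d : ℝ → E} {v : E} (hv : v ≠ 0)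
    (hd : Tendsto d l (nhds v)) :
    Tendsto (fun p => ‖d p‖⁻¹ • d p) l (nhds (‖v‖⁻¹ • v)) :=
  (hd.norm.inv₀ (norm_ne_zero_iff.mpr hv)).smul hd

lemma aux2 {E : Type*} [NormedAddCommGroup E] [NormedSpace ℝ E]
    {t : ℝ} (ht : 0 < t) (x : E) :
    ‖t • x‖⁻¹ • (t • x) = ‖x‖⁻¹ • x := by
  rcases eq_or_ne x 0 with rfl | hx
  · simp
  · have : (‖t • x‖ : ℝ)⁻¹ * t = ‖x‖⁻¹ := by
      rw [norm_smul, Real.norm_of_nonneg ht.le]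
      field_simp
    rw [smul_smul, this]

theorem stmt_7 (A α δ : ℝ) (hA : 0 < A) (hα : 0 < α) (hδ0 : 0 < δ) (hδ1 : δ < 1)
    (c : ℝ → EuclideanSpace ℝ (Fin 3))
    (hc : ∀ p : ℝ, c p = (EuclideanSpace.equiv (Fin 3) ℝ).symm
      ![p ^ (α * δ), p ^ (α * (1 - δ)), A * p ^ α]) :
    Tendsto c (nhdsWithin 0 (Set.Ioi 0)) (nhds 0) ∧
    (δ < 1 / 2 → Tendsto (fun p => ‖c p‖⁻¹ • c p) (nhdsWithin 0 (Set.Ioi 0))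
      (nhds ((EuclideanSpace.equiv (Fin 3) ℝ).symm ![1, 0, 0]))) ∧
    (δ = 1 / 2 → Tendsto (fun p => ‖c p‖⁻¹ • c p) (nhdsWithin 0 (Set.Ioi 0))
      (nhds ((EuclideanSpace.equiv (Fin 3) ℝ).symm
        ![1 / Real.sqrt 2, 1 / Real.sqrt 2, 0]))) ∧
    (1 / 2 < δ → Tendsto (fun p => ‖c p‖⁻¹ • c p) (nhdsWithin 0 (Set.Ioi 0))
      (nhds ((EuclideanSpace.equiv (Fin 3) ℝ).symm ![0, 1, 0]))) := by
  set e := EuclideanSpace.equiv (Fin 3) ℝ with he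
  have key : ∀ (s : ℝ) (v : Fin 3 → ℝ), v ≠ 0 →
      Tendsto (fun p : ℝ => (![p ^ (α*δ - s), p ^ (α*(1-δ) - s), A * p ^ (α - s)] : Fin 3 → ℝ))
        (nhdsWithin 0 (Set.Ioi 0)) (nhds v) →
      Tendsto (fun p => ‖c p‖⁻¹ • c p) (nhdsWithin 0 (Set.Ioi 0))
        (nhds (‖e.symm v‖⁻¹ • e.symm v)) := by
    intro s v hv hg
    have hpe : ∀ p : ℝ, 0 < p →
        (![p ^ (α*δ - s), p ^ (α*(1-δ) - s), A * p ^ (α - s)] : Fin 3 → ℝ)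
          = p ^ (-s) • ![p ^ (α*δ), p ^ (α*(1-δ)), A * p ^ α] := by
      intro p hp
      funext i
      fin_cases i <;>
        · simp [smul_eq_mul, Real.rpow_sub hp, Real.rpow_neg hp.le]
          ring
    have hd : Tendsto (fun p : ℝ => e.symm ![p ^ (α*δ - s), p ^ (α*(1-δ) - s), A * p ^ (α - s)])
        (nhdsWithin 0 (Set.Ioi 0)) (nhds (e.symm v)) :=
      (e.symm.continuous.tendsto v).comp hg
    have hvE : e.symm v ≠ 0 := by simpa using hv
    refine (aux_unit hvE hd).congr' ?_
    filter_upwards [self_mem_nhdsWithin] with p hp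
    have hp : (0:ℝ) < p := hp
    rw [hc p, hpe p hp, map_smul]
    exact aux2 (Real.rpow_pos_of_pos hp _) _
  have hz : ∀ r : ℝ, 0 < r →
      Tendsto (fun p : ℝ => A * p ^ r) (nhdsWithin 0 (Set.Ioi 0)) (nhds 0) := by
    intro r hr
    simpa using (rpow_tendsto0 hr).const_mul A
  refine ⟨?_, ?_, ?_, ?_⟩
  · have h : Tendsto (fun p : ℝ => (![p ^ (α*δ), p ^ (α*(1-δ)), A * p ^ α] : Fin 3 → ℝ))
        (nhdsWithin 0 (Set.Ioi 0)) (nhds ![0,0,0]) :=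
      pi3_tendsto (rpow_tendsto0 (by positivity))
        (rpow_tendsto0 (by nlinarith)) (hz α hα)
    have h2 := (e.symm.continuous.tendsto _).comp h
    have h3 : e.symm ![(0:ℝ),0,0] = 0 := by
      have : (![(0:ℝ),0,0] : Fin 3 → ℝ) = 0 := by
        funext i; fin_cases i <;> rfl
      rw [this, map_zero]
    rw [h3] at h2
    exact h2.congr fun p => (hc p).symm
  · intro hδ
    have h := key (α*δ) ![1,0,0] (by
        intro h; have := congrFun h 0; simp at this)
      (by
        refine pi3_tendsto ?_ (rpow_tendsto0 (by nlinarith)) (hz _ (by nlinarith))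
        simp only [sub_self, Real.rpow_zero]
        exact tendsto_const_nhds)
    have hnorm : ‖e.symm ![(1:ℝ),0,0]‖ = 1 := by
      simp [he, EuclideanSpace.norm_eq, Fin.sum_univ_three, PiLp.continuousLinearEquiv_symm_apply]
    rw [hnorm] at h
    simpa using h
  · intro hδ
    subst hδ
    have h := key (α*(1/2)) ![1,1,0] (by
        intro h; have := congrFun h 0; simp at this)
      (by
        refine pi3_tendsto ?_ ?_ (hz _ (by nlinarith))
        · simp only [sub_self, Real.rpow_zero]; exact tendsto_const_nhds
        · simp only [show α*(1-(1/2:ℝ)) - α*(1/2) = 0 by ring, Real.rpow_zero]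
          exact tendsto_const_nhds)
    have hnorm : ‖e.symm ![(1:ℝ),1,0]‖ = Real.sqrt 2 := by
      simp [he, EuclideanSpace.norm_eq, Fin.sum_univ_three, PiLp.continuousLinearEquiv_symm_apply]
      norm_num
    rw [hnorm] at h
    have hv2 : (Real.sqrt 2)⁻¹ • e.symm ![(1:ℝ),1,0]
        = e.symm ![1 / Real.sqrt 2, 1 / Real.sqrt 2, 0] := by
      rw [← map_smul]
      congr 1
      funext i; fin_cases i <;> simp [one_div]
    rw [hv2] at h
    exact h
  · intro hδ
    have h := key (α*(1-δ)) ![0,1,0] (by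
        intro h; have := congrFun h 1; simp at this)
      (by
        refine pi3_tendsto (rpow_tendsto0 (by nlinarith)) ?_ (hz _ (by nlinarith))
        simp only [sub_self, Real.rpow_zero]
        exact tendsto_const_nhds)
    have hnorm : ‖e.symm ![(0:ℝ),1,0]‖ = 1 := by
      simp [he, EuclideanSpace.norm_eq, Fin.sum_univ_three, PiLp.continuousLinearEquiv_symm_apply]
    rw [hnorm] at h
    simpa using h
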